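/- Let Δ > 1 and L ≥ 2 an integer. The XXZ Hamiltonian H^XXZ_{[1,L]} on H_L = (ℂ²)^{⊗L} is positive semidefinite, its kernel equals span{|↑⋯↑⟩, |↓⋯↓⟩} exactly, and as quadratic forms H^XXZ_{[1,L]} ≥ (1/2)(1 − Δ⁻¹)(1 − P₀), where P₀ is the orthogonal projection onto span{|↑⋯↑⟩, |↓⋯↓⟩}. -/

import Mathlib

open scoped Classical

noncomputable section

/-- Spin configurations of the chain of length `L`; `true` means down spin. -/
abbrev SpinConf (L : ℕ) := Fin L → Bool

/-- The Hilbert space `(ℂ²)^{⊗L}` in the configuration basis. -/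
abbrev ChainSpace (L : ℕ) := EuclideanSpace ℂ (SpinConf L)

/-- The set of down-spin sites of a configuration. -/
def downs {L : ℕ} (σ : SpinConf L) : Finset (Fin L) := Finset.univ.filter fun i => σ i = true

/-- Exchange the spins at sites `i` and `j`. -/
def swapPair {L : ℕ} (i j : Fin L) (σ : SpinConf L) : SpinConf L :=
  fun k => if k = i then σ j else if k = j then σ i else σ k

/-- The matrix of the nearest-neighbour interaction
`H^XXZ_{i,j} = −Δ⁻¹(S⃗_i·S⃗_j − 1/4) − (1−Δ⁻¹)(S³_iS³_j − 1/4)` in the configuration basis: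
it annihilates configurations with equal spins at `i,j`, and on a configuration with
opposite spins it acts by `(1/2)·id − (1/(2Δ))·(spin exchange)`. -/
def bondMat (Δ : ℝ) {L : ℕ} (i j : Fin L) : Matrix (SpinConf L) (SpinConf L) ℂ :=
  fun σ τ =>
    if σ i = σ j then 0
    else (if τ = σ then (1/2 : ℂ) else 0) -
      ((1/(2*Δ) : ℝ) : ℂ) * (if τ = swapPair i j σ then 1 else 0)

/-- `H^XXZ_{[1,L]} = Σ_{x=1}^{L−1} H^XXZ_{x,x+1}` (sites are `1,…,L`, i.e. `i+1` for `i : Fin L`). -/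
def xxzMat (Δ : ℝ) (L : ℕ) : Matrix (SpinConf L) (SpinConf L) ℂ :=
  ∑ x : Fin L, if h : (x : ℕ) + 1 < L then bondMat Δ x ⟨(x : ℕ) + 1, h⟩ else 0

/-- Third spin component at site `i`: diagonal with value `±1/2`. -/
def s3Mat {L : ℕ} (i : Fin L) : Matrix (SpinConf L) (SpinConf L) ℂ :=
  fun σ τ => if τ = σ then (if σ i then (-(1/2) : ℂ) else (1/2 : ℂ)) else 0

/-- `A(Δ) = (1/2)√(1 − Δ⁻²)`. -/
def aDelta (Δ : ℝ) : ℝ := Real.sqrt (1 - Δ⁻¹ ^ 2) / 2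

/-- The droplet Hamiltonian `H^{++}_{[1,L]} = H^XXZ_{[1,L]} − A(Δ)(S³_1 + S³_L)`. -/
def hppMat (Δ : ℝ) (L : ℕ) (hL : 0 < L) : Matrix (SpinConf L) (SpinConf L) ℂ :=
  xxzMat Δ L - ((aDelta Δ : ℝ) : ℂ) •
    (s3Mat (⟨0, hL⟩ : Fin L) + s3Mat (⟨L - 1, by omega⟩ : Fin L))

/-- The all-up product vector `|↑⋯↑⟩`. -/
def allUpVec (L : ℕ) : ChainSpace L := EuclideanSpace.single (fun _ => false) 1

/-- The all-down product vector `|↓⋯↓⟩`. -/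
def allDownVec (L : ℕ) : ChainSpace L := EuclideanSpace.single (fun _ => true) 1

/-- continuous linear map associated to a matrix. -/
def matCLM {L : ℕ} (M : Matrix (SpinConf L) (SpinConf L) ℂ) :
    ChainSpace L →L[ℂ] ChainSpace L :=
  LinearMap.toContinuousLinearMap (Matrix.toEuclideanLin M)

/-- The orthogonal projection onto a subspace, as an operator on the whole space. -/
def projCLM {L : ℕ} (K : Submodule ℂ (ChainSpace L)) : ChainSpace L →L[ℂ] ChainSpace L :=
  K.subtypeL.comp K.orthogonalProjection

/-- The kink ⊗ antikink droplet state `ξ_{L,n}(x) = ψ^{+−}_{[1,x]}(⌊n/2⌋) ⊗ ψ^{−+}_{[x+1,L]}(⌈n/2⌉)`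
written in the configuration basis (site `i : Fin L` has position `i+1`). -/
def dropletVec (q : ℝ) (L n x : ℕ) : ChainSpace L :=
  WithLp.toLp 2 fun σ : SpinConf L =>
    if ((downs σ).filter fun i => (i : ℕ) + 1 ≤ x).card = n / 2 ∧
       ((downs σ).filter fun i => x < (i : ℕ) + 1).card = n - n / 2 then
      (q : ℂ) ^ ((∑ i ∈ (downs σ).filter fun i => (i : ℕ) + 1 ≤ x, ((x : ℤ) - (i : ℕ))) +
        ∑ i ∈ (downs σ).filter fun i => x < (i : ℕ) + 1, (((i : ℕ) : ℤ) + 1 - (x : ℤ)))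
    else 0

/-- The droplet subspace `K_{L,n} = span{ξ_{L,n}(x) : ⌊n/2⌋ ≤ x ≤ L − ⌈n/2⌉}`. -/
def dropletSpace (q : ℝ) (L n : ℕ) : Submodule ℂ (ChainSpace L) :=
  Submodule.span ℂ {v | ∃ x : ℕ, n / 2 ≤ x ∧ x ≤ L - (n - n / 2) ∧ v = dropletVec q L n x}

/-- `P_J` for the interval `J` of positions `[a, a+l−1]`: projection onto configurations that
are fully polarized (all up or all down) on `J`. -/
def pJ (L a l : ℕ) (ψ : ChainSpace L) : ChainSpace L :=
  WithLp.toLp 2 fun σ : SpinConf L =>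
    if (∀ i : Fin L, a ≤ (i : ℕ) + 1 → (i : ℕ) + 1 ≤ a + l - 1 → σ i = false) ∨
       (∀ i : Fin L, a ≤ (i : ℕ) + 1 → (i : ℕ) + 1 ≤ a + l - 1 → σ i = true) then ψ σ else 0

end

/-- The span of the all-up and all-down product vectors. -/
noncomputable def upDownSpan (L : ℕ) : Submodule ℂ (ChainSpace L) :=
  Submodule.span ℂ {allUpVec L, allDownVec L}


namespace Stmt10Aux

open Finset Matrix

variable {L : ℕ}

lemma swap_fst (i j : Fin L) (σ : SpinConf L) : swapPair i j σ i = σ j := by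
  simp [swapPair]

lemma swap_snd {i j : Fin L} (hij : i ≠ j) (σ : SpinConf L) : swapPair i j σ j = σ i := by
  simp [swapPair, (Ne.symm hij : j ≠ i)]

lemma swap_invol (i j : Fin L) (σ : SpinConf L) : swapPair i j (swapPair i j σ) = σ := by
  funext k
  unfold swapPair
  by_cases hki : k = i <;> by_cases hkj : k = j <;> by_cases hji : j = i <;>
    simp_all

lemma swap_eq_iff (i j : Fin L) (σ τ : SpinConf L) :
    σ = swapPair i j τ ↔ τ = swapPair i j σ := by
  constructor
  · rintro rfl; exact (swap_invol i j τ).symm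
  · rintro rfl; exact (swap_invol i j σ).symm

lemma bond_mulVec (Δ : ℝ) (i j : Fin L) (ψ : SpinConf L → ℂ) (σ : SpinConf L) :
    (bondMat Δ i j *ᵥ ψ) σ =
      if σ i = σ j then 0
      else (1/2 : ℂ) * ψ σ - ((1/(2*Δ) : ℝ) : ℂ) * ψ (swapPair i j σ) := by
  by_cases h : σ i = σ j
  · simp [Matrix.mulVec, dotProduct, bondMat, h]
  · simp only [Matrix.mulVec, dotProduct, bondMat, h, if_false]
    rw [Finset.sum_congr rfl (fun τ _ => sub_mul _ _ _), Finset.sum_sub_distrib]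
    congr 1
    · simp only [ite_mul, zero_mul]
      rw [Finset.sum_ite_eq' Finset.univ σ fun τ => (1/2 : ℂ) * ψ τ]
      simp
    · simp only [mul_assoc, mul_ite, mul_one, mul_zero, ite_mul, zero_mul]
      rw [Finset.sum_ite_eq' Finset.univ (swapPair i j σ)
        fun τ => ((1/(2*Δ) : ℝ) : ℂ) * ψ τ]
      simp

lemma bond_herm (Δ : ℝ) {i j : Fin L} (hij : i ≠ j) : (bondMat Δ i j).IsHermitian := by
  unfold Matrix.IsHermitian
  ext σ τ
  rw [Matrix.conjTranspose_apply]
  have hstar : star (bondMat Δ i j τ σ) = bondMat Δ i j τ σ := by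
    unfold bondMat
    split_ifs <;> simp [Complex.star_def, Complex.conj_ofReal]
  rw [hstar]
  unfold bondMat
  by_cases h1 : σ i = σ j <;> by_cases h2 : τ i = τ j
  · simp [h1, h2]
  · rw [if_pos h1, if_neg h2]
    have e1 : σ ≠ τ := fun e => h2 (e ▸ h1)
    have e2 : σ ≠ swapPair i j τ := by
      intro e
      apply h2
      have a1 : σ i = τ j := by rw [e, swap_fst]
      have a2 : σ j = τ i := by rw [e, swap_snd hij]
      rw [← a2, ← h1, a1]
    rw [if_neg e1, if_neg e2]
    ring
  · rw [if_neg h1, if_pos h2]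
    have e1 : τ ≠ σ := fun e => h1 (e ▸ h2)
    have e2 : τ ≠ swapPair i j σ := by
      intro e
      apply h1
      have a1 : τ i = σ j := by rw [e, swap_fst]
      have a2 : τ j = σ i := by rw [e, swap_snd hij]
      rw [← a2, ← h2, a1]
    rw [if_neg e1, if_neg e2]
    ring
  · rw [if_neg h1, if_neg h2]
    by_cases hts : τ = σ
    · rw [if_pos hts, if_pos hts.symm]
      by_cases hsw : τ = swapPair i j σ
      · rw [if_pos hsw, if_pos ((swap_eq_iff i j σ τ).mpr hsw)]
      · rw [if_neg hsw, if_neg fun e => hsw ((swap_eq_iff i j σ τ).mp e)]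
    · rw [if_neg hts, if_neg (Ne.symm hts)]
      by_cases hsw : τ = swapPair i j σ
      · rw [if_pos hsw, if_pos ((swap_eq_iff i j σ τ).mpr hsw)]
      · rw [if_neg hsw, if_neg fun e => hsw ((swap_eq_iff i j σ τ).mp e)]

lemma xxz_herm (Δ : ℝ) (L : ℕ) : (xxzMat Δ L).IsHermitian := by
  unfold xxzMat Matrix.IsHermitian
  rw [Matrix.conjTranspose_sum]
  refine Finset.sum_congr rfl fun x _ => ?_
  by_cases h : (x : ℕ) + 1 < L
  · simp only [dif_pos h]
    exact bond_herm Δ (Fin.ne_of_val_ne (show (x:ℕ) ≠ (x:ℕ)+1 by omega))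
  · simp only [dif_neg h, Matrix.conjTranspose_zero]

lemma dot_sum {n ι : Type*} [Fintype n] (v w : n → ℂ) (s : Finset ι)
    (A : ι → Matrix n n ℂ) :
    star v ⬝ᵥ ((∑ x ∈ s, A x) *ᵥ w) = ∑ x ∈ s, star v ⬝ᵥ (A x *ᵥ w) := by
  classical
  induction s using Finset.cons_induction with
  | empty => simp
  | cons a s ha ih => rw [Finset.sum_cons, Finset.sum_cons, Matrix.add_mulVec,
      dotProduct_add, ih]

lemma herm_form_real {n : Type*} [Fintype n] {M : Matrix n n ℂ} (hM : M.IsHermitian)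
    (ψ : n → ℂ) :
    (((star ψ ⬝ᵥ (M *ᵥ ψ)).re : ℝ) : ℂ) = star ψ ⬝ᵥ (M *ᵥ ψ) := by
  rw [← Complex.conj_eq_iff_re]
  calc (starRingEnd ℂ) (star ψ ⬝ᵥ (M *ᵥ ψ))
      = star (star ψ ⬝ᵥ (M *ᵥ ψ)) := rfl
    _ = star (M *ᵥ ψ) ⬝ᵥ star (star ψ) := by rw [Matrix.star_dotProduct]; simp
    _ = (star ψ ᵥ* Mᴴ) ⬝ᵥ ψ := by rw [Matrix.star_mulVec, star_star]
    _ = star ψ ⬝ᵥ (M *ᵥ ψ) := by rw [hM.eq, ← dotProduct_mulVec]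

lemma star_mul_self_re (z : ℂ) : (star z * z).re = ‖z‖^2 := by
  rw [Complex.sq_norm, Complex.normSq_apply]
  simp [Complex.mul_re]

lemma re_conj_mul_le (a b : ℂ) : (star a * b).re ≤ (‖a‖^2 + ‖b‖^2)/2 := by
  have h1 : (star a * b).re ≤ ‖star a * b‖ := by
    exact Complex.re_le_norm _
  have h2 : ‖star a * b‖ = ‖a‖ * ‖b‖ := by rw [norm_mul, norm_star]
  nlinarith [sq_nonneg (‖a‖ - ‖b‖), norm_nonneg a, norm_nonneg b]

lemma bond_re (Δ : ℝ) (hΔ : 1 < Δ) {i j : Fin L} (hij : i ≠ j) (ψ : SpinConf L → ℂ) :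
    (1/2 - 1/(2*Δ)) * ∑ σ : SpinConf L, (if σ i = σ j then 0 else ‖ψ σ‖^2)
      ≤ (star ψ ⬝ᵥ (bondMat Δ i j *ᵥ ψ)).re := by
  have hΔ0 : (0:ℝ) < Δ := lt_trans one_pos hΔ
  set c : ℝ := 1/(2*Δ) with hc
  have hc0 : 0 < c := by positivity
  set S : Finset (SpinConf L) := Finset.univ.filter (fun σ => ¬ σ i = σ j) with hS
  have hsum1 : ∑ σ : SpinConf L, (if σ i = σ j then 0 else ‖ψ σ‖^2)
      = ∑ σ ∈ S, ‖ψ σ‖^2 := by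
    rw [hS, Finset.sum_filter]
    exact Finset.sum_congr rfl fun σ _ => by by_cases h : σ i = σ j <;> simp [h]
  have hmem : ∀ σ ∈ S, swapPair i j σ ∈ S := by
    intro σ hσ
    simp only [hS, Finset.mem_filter, Finset.mem_univ, true_and] at hσ ⊢
    rw [swap_fst, swap_snd hij]
    exact fun e => hσ e.symm
  have hre : (star ψ ⬝ᵥ (bondMat Δ i j *ᵥ ψ)).re
      = ∑ σ ∈ S, ((1/2) * ‖ψ σ‖^2 - c * (star (ψ σ) * ψ (swapPair i j σ)).re) := by
    unfold dotProduct
    rw [Complex.re_sum, hS, Finset.sum_filter]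
    refine Finset.sum_congr rfl fun σ _ => ?_
    rw [bond_mulVec]
    simp only [Pi.star_apply]
    rw [← hc]
    by_cases h : σ i = σ j
    · simp [h]
    · rw [if_neg h, if_pos h]
      have he : star (ψ σ) * ((1/2 : ℂ) * ψ σ - ((c:ℝ) : ℂ) * ψ (swapPair i j σ))
          = ((1/2 : ℝ) : ℂ) * (star (ψ σ) * ψ σ)
            - ((c:ℝ) : ℂ) * (star (ψ σ) * ψ (swapPair i j σ)) := by
        push_cast; ring
      rw [he, Complex.sub_re, Complex.re_ofReal_mul, Complex.re_ofReal_mul,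
        star_mul_self_re]
  have hswap : ∑ σ ∈ S, ‖ψ (swapPair i j σ)‖^2 = ∑ σ ∈ S, ‖ψ σ‖^2 := by
    refine Finset.sum_nbij' (swapPair i j) (swapPair i j) hmem hmem
      (fun σ _ => swap_invol i j σ) (fun σ _ => swap_invol i j σ) (fun σ _ => rfl)
  have hcross : ∑ σ ∈ S, (star (ψ σ) * ψ (swapPair i j σ)).re ≤ ∑ σ ∈ S, ‖ψ σ‖^2 := by
    calc ∑ σ ∈ S, (star (ψ σ) * ψ (swapPair i j σ)).re
        ≤ ∑ σ ∈ S, (‖ψ σ‖^2 + ‖ψ (swapPair i j σ)‖^2)/2 :=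
          Finset.sum_le_sum fun σ _ => re_conj_mul_le _ _
      _ = ∑ σ ∈ S, ‖ψ σ‖^2 := by
          rw [← Finset.sum_div, Finset.sum_add_distrib, hswap]; ring
  rw [hre, hsum1, Finset.sum_sub_distrib, ← Finset.mul_sum, ← Finset.mul_sum]
  have := mul_le_mul_of_nonneg_left hcross hc0.le
  linarith

lemma exists_adj {L : ℕ} (hL : 0 < L) (σ : SpinConf L)
    (h1 : σ ≠ fun _ => false) (h2 : σ ≠ fun _ => true) :
    ∃ x : Fin L, ∃ h : (x : ℕ) + 1 < L, ¬ σ x = σ ⟨(x : ℕ) + 1, h⟩ := by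
  by_contra hc
  push_neg at hc
  have const : ∀ k, (hk : k < L) → σ ⟨k, hk⟩ = σ ⟨0, hL⟩ := by
    intro k
    induction k with
    | zero => intro hk; rfl
    | succ n ih =>
      intro hk
      have hn : n < L := by omega
      have := hc ⟨n, hn⟩ hk
      rw [← this]
      exact ih hn
  cases hb : σ ⟨0, hL⟩ with
  | false =>
    apply h1; funext x
    have := const x.1 x.2
    rw [Fin.eta] at this
    rw [this, hb]
  | true =>
    apply h2; funext x
    have := const x.1 x.2
    rw [Fin.eta] at this
    rw [this, hb]

/-- the "tail" of `ψ`: total weight outside the two constant configurations. -/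
noncomputable def tail (L : ℕ) (ψ : SpinConf L → ℂ) : ℝ :=
  ∑ σ : SpinConf L, (if σ = (fun _ => false) ∨ σ = (fun _ => true) then 0 else ‖ψ σ‖^2)

lemma tail_nonneg (L : ℕ) (ψ : SpinConf L → ℂ) : 0 ≤ tail L ψ := by
  refine Finset.sum_nonneg fun σ _ => ?_
  split_ifs <;> positivity

lemma main_ineq (Δ : ℝ) (hΔ : 1 < Δ) (L : ℕ) (hL : 2 ≤ L) (ψ : SpinConf L → ℂ) :
    (1/2) * (1 - Δ⁻¹) * tail L ψ ≤ (star ψ ⬝ᵥ (xxzMat Δ L *ᵥ ψ)).re := by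
  have hΔ0 : (0:ℝ) < Δ := lt_trans one_pos hΔ
  have hfac : (1/2) * (1 - Δ⁻¹) = 1/2 - 1/(2*Δ) := by
    field_simp
  set D : Fin L → SpinConf L → ℝ := fun x σ =>
    if h : (x : ℕ) + 1 < L then (if σ x = σ ⟨(x : ℕ) + 1, h⟩ then 0 else ‖ψ σ‖^2) else 0
    with hD
  have hDnn : ∀ x σ, 0 ≤ D x σ := by
    intro x σ; rw [hD]; dsimp only; split_ifs <;> positivity
  have step1 : (1/2 - 1/(2*Δ)) * ∑ x : Fin L, ∑ σ : SpinConf L, D x σ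
      ≤ (star ψ ⬝ᵥ (xxzMat Δ L *ᵥ ψ)).re := by
    unfold xxzMat
    rw [dot_sum, Complex.re_sum, Finset.mul_sum]
    refine Finset.sum_le_sum fun x _ => ?_
    by_cases h : (x : ℕ) + 1 < L
    · rw [dif_pos h]
      have hb := bond_re Δ hΔ (i := x) (j := (⟨(x : ℕ) + 1, h⟩ : Fin L))
        (Fin.ne_of_val_ne (show (x:ℕ) ≠ (x:ℕ)+1 by omega)) ψ
      refine le_trans (le_of_eq ?_) hb
      congr 1
      refine Finset.sum_congr rfl fun σ _ => ?_
      rw [hD]; dsimp only; rw [dif_pos h]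
    · rw [dif_neg h]
      have : ∑ σ : SpinConf L, D x σ = 0 := by
        refine Finset.sum_eq_zero fun σ _ => ?_
        rw [hD]; dsimp only; rw [dif_neg h]
      rw [this, Matrix.zero_mulVec]
      simp
  have step2 : tail L ψ ≤ ∑ x : Fin L, ∑ σ : SpinConf L, D x σ := by
    rw [Finset.sum_comm]
    refine Finset.sum_le_sum fun σ _ => ?_
    by_cases hcst : σ = (fun _ => false) ∨ σ = (fun _ => true)
    · rw [if_pos hcst]
      exact Finset.sum_nonneg fun x _ => hDnn x σ
    · rw [if_neg hcst]
      push_neg at hcst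
      obtain ⟨x₀, h₀, hne⟩ := exists_adj (by omega) σ hcst.1 hcst.2
      have hx : D x₀ σ = ‖ψ σ‖^2 := by
        rw [hD]; dsimp only; rw [dif_pos h₀, if_neg hne]
      calc ‖ψ σ‖^2 = D x₀ σ := hx.symm
        _ ≤ ∑ x : Fin L, D x σ :=
          Finset.single_le_sum (fun x _ => hDnn x σ) (Finset.mem_univ x₀)
  have hnn : (0:ℝ) ≤ 1/2 - 1/(2*Δ) := by
    have h2 : 1/(2*Δ) ≤ 1/2 := by
      apply one_div_le_one_div_of_le (by norm_num)
      linarith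
    linarith
  calc (1/2) * (1 - Δ⁻¹) * tail L ψ = (1/2 - 1/(2*Δ)) * tail L ψ := by rw [hfac]
    _ ≤ (1/2 - 1/(2*Δ)) * ∑ x : Fin L, ∑ σ : SpinConf L, D x σ :=
        mul_le_mul_of_nonneg_left step2 hnn
    _ ≤ _ := step1

lemma cf_ne_ct (hL : 0 < L) :
    (fun _ => false : SpinConf L) ≠ (fun _ => true) := by
  intro h
  have := congrFun h ⟨0, hL⟩
  simp at this

/-- The candidate projection of `ψ` onto the up/down span. -/
noncomputable def chi (L : ℕ) (ψ : ChainSpace L) : ChainSpace L :=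
  ψ (fun _ => false) • allUpVec L + ψ (fun _ => true) • allDownVec L

lemma chi_apply (hL : 0 < L) (ψ : ChainSpace L) (σ : SpinConf L) :
    chi L ψ σ = if σ = (fun _ => false) then ψ (fun _ => false)
      else if σ = (fun _ => true) then ψ (fun _ => true) else 0 := by
  have hne := cf_ne_ct (L := L) hL
  unfold chi allUpVec allDownVec
  rw [PiLp.add_apply, PiLp.smul_apply, PiLp.smul_apply,
    EuclideanSpace.single_apply, EuclideanSpace.single_apply]
  simp only [smul_eq_mul]
  by_cases h1 : σ = (fun _ => false)
  · have h2 : σ ≠ (fun _ => true) := fun e => hne (h1.symm.trans e)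
    rw [if_pos h1, if_pos h1, if_neg h2, mul_one, mul_zero, add_zero]
  · rw [if_neg h1, if_neg h1, mul_zero, zero_add]
    by_cases h2 : σ = (fun _ => true)
    · rw [if_pos h2, if_pos h2, mul_one]
    · rw [if_neg h2, if_neg h2, mul_zero]

lemma chi_mem (ψ : ChainSpace L) : chi L ψ ∈ upDownSpan L := by
  refine Submodule.add_mem _ (Submodule.smul_mem _ _ ?_) (Submodule.smul_mem _ _ ?_)
  · exact Submodule.subset_span (Set.mem_insert _ _)
  · exact Submodule.subset_span (Set.mem_insert_of_mem _ rfl)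

lemma proj_eq (hL : 0 < L) (ψ : ChainSpace L) :
    ((upDownSpan L).orthogonalProjection ψ : ChainSpace L) = chi L ψ := by
  refine Submodule.eq_starProjection_of_mem_of_inner_eq_zero (chi_mem ψ) ?_
  intro w hw
  induction hw using Submodule.span_induction with
  | mem x hx =>
    simp only [Set.mem_insert_iff, Set.mem_singleton_iff] at hx
    rcases hx with rfl | rfl
    · unfold allUpVec
      rw [EuclideanSpace.inner_single_right]
      have : (ψ - chi L ψ) (fun _ => false) = 0 := by
        rw [PiLp.sub_apply, chi_apply hL, if_pos rfl, sub_self]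
      rw [this]
      simp
    · unfold allDownVec
      rw [EuclideanSpace.inner_single_right]
      have : (ψ - chi L ψ) (fun _ => true) = 0 := by
        rw [PiLp.sub_apply, chi_apply hL, if_neg (Ne.symm (cf_ne_ct hL)),
          if_pos rfl, sub_self]
      rw [this]
      simp
  | zero => simp
  | add x y _ _ hx hy => rw [inner_add_right, hx, hy, add_zero]
  | smul a x _ hx => rw [inner_smul_right, hx, mul_zero]

lemma normsq_eq (x : ChainSpace L) : ‖x‖^2 = ∑ σ : SpinConf L, ‖x σ‖^2 := by
  rw [EuclideanSpace.norm_eq, Real.sq_sqrt]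
  positivity

lemma tail_eq (hL : 0 < L) (ψ : ChainSpace L) :
    ‖ψ‖^2 - ‖(upDownSpan L).orthogonalProjection ψ‖^2 = tail L ψ := by
  have hne := cf_ne_ct (L := L) hL
  have h1 : ‖(upDownSpan L).orthogonalProjection ψ‖
      = ‖((upDownSpan L).orthogonalProjection ψ : ChainSpace L)‖ := rfl
  rw [h1, proj_eq hL ψ, normsq_eq, normsq_eq, ← Finset.sum_sub_distrib]
  unfold tail
  refine Finset.sum_congr rfl fun σ _ => ?_
  rw [chi_apply hL]
  by_cases h1 : σ = (fun _ => false)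
  · rw [h1]; simp [hne]
  · by_cases h2 : σ = (fun _ => true)
    · rw [h2]; simp [Ne.symm hne]
    · rw [if_neg h1, if_neg h2, if_neg (by tauto)]; simp

lemma eq_chi_of_tail_zero (hL : 0 < L) (ψ : ChainSpace L) (h : tail L ψ = 0) :
    ψ = chi L ψ := by
  have hne := cf_ne_ct (L := L) hL
  have hdiff : ‖ψ - chi L ψ‖^2 = tail L ψ := by
    rw [normsq_eq]
    unfold tail
    refine Finset.sum_congr rfl fun σ _ => ?_
    rw [PiLp.sub_apply, chi_apply hL]
    by_cases h1 : σ = (fun _ => false)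
    · rw [h1]; simp [hne]
    · by_cases h2 : σ = (fun _ => true)
      · rw [h2]; simp [Ne.symm hne]
      · rw [if_neg h1, if_neg h2, if_neg (by tauto)]; simp
  have : ‖ψ - chi L ψ‖ = 0 := by
    have := hdiff.trans h
    nlinarith [norm_nonneg (ψ - chi L ψ)]
  rw [← sub_eq_zero]
  exact norm_eq_zero.mp this

lemma ker_const (Δ : ℝ) (L : ℕ) (b : Bool) :
    xxzMat Δ L *ᵥ (fun τ => if τ = (fun _ => b : SpinConf L) then 1 else 0) = 0 := by
  funext σ
  show (xxzMat Δ L *ᵥ _) σ = 0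
  unfold Matrix.mulVec dotProduct
  have hsum : (∑ τ : SpinConf L,
      (xxzMat Δ L σ τ) * (if τ = (fun _ => b : SpinConf L) then 1 else 0))
      = xxzMat Δ L σ (fun _ => b) := by
    simp only [mul_ite, mul_one, mul_zero]
    rw [Finset.sum_ite_eq' Finset.univ (fun _ => b : SpinConf L)
      (fun τ => xxzMat Δ L σ τ)]
    simp
  rw [hsum]
  · unfold xxzMat
    rw [Matrix.sum_apply]
    refine Finset.sum_eq_zero fun x _ => ?_
    by_cases h : (x : ℕ) + 1 < L
    · rw [dif_pos h]
      unfold bondMat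
      by_cases hσ : σ x = σ ⟨(x : ℕ) + 1, h⟩
      · rw [if_pos hσ]
      · rw [if_neg hσ]
        have hxne : x ≠ (⟨(x : ℕ) + 1, h⟩ : Fin L) :=
          Fin.ne_of_val_ne (show (x:ℕ) ≠ (x:ℕ)+1 by omega)
        have e1 : (fun _ => b : SpinConf L) ≠ σ := by
          intro e; exact hσ (by rw [← e])
        have e2 : (fun _ => b : SpinConf L) ≠ swapPair x ⟨(x : ℕ) + 1, h⟩ σ := by
          intro e
          apply hσ
          have a1 : b = σ ⟨(x : ℕ) + 1, h⟩ := by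
            have := congrFun e x
            rwa [swap_fst] at this
          have a2 : b = σ x := by
            have := congrFun e ⟨(x : ℕ) + 1, h⟩
            rwa [swap_snd hxne] at this
          rw [← a1, ← a2]
        rw [if_neg e1, if_neg e2]
        ring
    · rw [dif_neg h]; rfl

end Stmt10Aux

open scoped ComplexOrder in
/-- `H^XXZ_{[1,L]}` is positive semidefinite, its kernel is exactly
`span{|↑⋯↑⟩, |↓⋯↓⟩}`, and as quadratic forms `H^XXZ ≥ (1/2)(1−Δ⁻¹)(1 − P₀)` where `P₀`
is the orthogonal projection onto this span. -/
theorem stmt10 (Δ : ℝ) (hΔ : 1 < Δ) (L : ℕ) (hL : 2 ≤ L) :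
    (xxzMat Δ L).PosSemidef ∧
    LinearMap.ker (Matrix.toEuclideanLin (xxzMat Δ L)) = upDownSpan L ∧
    ∀ ψ : ChainSpace L,
      (1/2) * (1 - Δ⁻¹) *
          (‖ψ‖ ^ 2 - ‖(upDownSpan L).orthogonalProjection ψ‖ ^ 2)
        ≤ (inner ℂ ψ (Matrix.toEuclideanLin (xxzMat Δ L) ψ) : ℂ).re := by
  have hΔ0 : (0:ℝ) < Δ := lt_trans one_pos hΔ
  have hL0 : 0 < L := by omega
  have hherm := Stmt10Aux.xxz_herm Δ L
  have hinner : ∀ ψ : ChainSpace L,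
      (inner ℂ ψ (Matrix.toEuclideanLin (xxzMat Δ L) ψ) : ℂ)
        = dotProduct (star (ψ : SpinConf L → ℂ))
            (Matrix.mulVec (xxzMat Δ L) (ψ : SpinConf L → ℂ)) := by
    intro ψ
    rw [EuclideanSpace.inner_eq_star_dotProduct, dotProduct_comm]
    rfl
  have hmain := fun ψ : SpinConf L → ℂ => Stmt10Aux.main_ineq Δ hΔ L hL ψ
  have hfacnn : (0:ℝ) ≤ (1/2) * (1 - Δ⁻¹) := by
    have h1 : Δ⁻¹ < 1 := inv_lt_one_of_one_lt₀ hΔ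
    nlinarith
  refine ⟨Matrix.posSemidef_iff_dotProduct_mulVec.mpr ⟨hherm, fun x => ?_⟩, ?_, fun ψ => ?_⟩
  · rw [Complex.nonneg_iff]
    constructor
    · refine le_trans ?_ (hmain x)
      exact mul_nonneg hfacnn (Stmt10Aux.tail_nonneg L x)
    · rw [← Stmt10Aux.herm_form_real hherm x]
      simp
  · apply le_antisymm
    · intro ψ hψ
      have hz : Matrix.toEuclideanLin (xxzMat Δ L) ψ = 0 := LinearMap.mem_ker.mp hψ
      have h0 : (inner ℂ ψ (Matrix.toEuclideanLin (xxzMat Δ L) ψ) : ℂ) = 0 := by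
        rw [hz, inner_zero_right]
      have hre0 : (dotProduct (star (ψ : SpinConf L → ℂ))
          (Matrix.mulVec (xxzMat Δ L) ψ)).re = 0 := by
        rw [← hinner ψ, h0]
        rfl
      have hle := hmain ψ
      rw [hre0] at hle
      have hfacpos : (0:ℝ) < (1/2) * (1 - Δ⁻¹) := by
        have h1 : Δ⁻¹ < 1 := inv_lt_one_of_one_lt₀ hΔ
        nlinarith
      have htail0 : Stmt10Aux.tail L ψ = 0 := by
        have h1 := Stmt10Aux.tail_nonneg L ψ
        nlinarith
      have := Stmt10Aux.eq_chi_of_tail_zero hL0 ψ htail0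
      rw [this]
      exact Stmt10Aux.chi_mem ψ
    · rw [upDownSpan, Submodule.span_le]
      rintro v hv
      simp only [Set.mem_insert_iff, Set.mem_singleton_iff] at hv
      have hker : ∀ b : Bool,
          Matrix.toEuclideanLin (xxzMat Δ L) (EuclideanSpace.single (fun _ => b) 1) = 0 := by
        intro b
        have harg : WithLp.ofLp
            (EuclideanSpace.single (fun _ => b : SpinConf L) (1:ℂ))
            = fun τ => if τ = (fun _ => b) then 1 else 0 := by
          funext τ
          exact EuclideanSpace.single_apply _ _ _
        rw [Matrix.toEuclideanLin_apply, harg, Stmt10Aux.ker_const Δ L b]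
        rfl
      rcases hv with rfl | rfl
      · rw [SetLike.mem_coe, LinearMap.mem_ker]
        exact hker false
      · rw [SetLike.mem_coe, LinearMap.mem_ker]
        exact hker true
  · rw [hinner ψ]
    have := Stmt10Aux.tail_eq hL0 ψ
    rw [this]
    exact hmain ψ
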